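/- Let M be an invertible n×n integer matrix and let θ_1,…,θ_n be nonzero complex numbers such that for each i, the product Π_j θ_j^{M_{ij}} is a root of unity. Then each θ_i is a root of unity. -/

import Mathlib

private lemma zpow_sum_aux {G : Type*} [CommGroup G] (a : G) {ι : Type*} (s : Finset ι)
    (f : ι → ℤ) : a ^ (∑ i ∈ s, f i) = ∏ i ∈ s, a ^ f i := by
  classical
  induction s using Finset.induction_on with
  | empty => simp
  | insert _ _ h ih => rw [Finset.sum_insert h, Finset.prod_insert h, zpow_add, ih]

/-- If `M` is an invertible `n × n` integer matrix and `θ₁, …, θₙ` are nonzero complex numbers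
such that for each `i` the product `∏ j, θ j ^ (M i j)` is a root of unity, then each `θ i`
is a root of unity. -/
theorem roots_of_unity_of_invertible_exponent_matrix {n : ℕ}
    (M : Matrix (Fin n) (Fin n) ℤ) (hdet : M.det ≠ 0)
    (θ : Fin n → ℂ) (hθ : ∀ j, θ j ≠ 0)
    (hroot : ∀ i, ∃ N : ℕ, 1 ≤ N ∧ (∏ j, θ j ^ (M i j)) ^ N = 1) :
    ∀ i, ∃ m : ℕ, 1 ≤ m ∧ θ i ^ m = 1 := by
  classical
  intro k
  set u : Fin n → ℂˣ := fun j => Units.mk0 (θ j) (hθ j) with hu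
  set x : Fin n → ℂˣ := fun i => ∏ j, u j ^ (M i j) with hx
  choose N hN1 hNroot using hroot
  -- x i ^ N i = 1 in ℂˣ
  have hxN : ∀ i, x i ^ (N i) = 1 := by
    intro i
    ext
    push_cast [hx, hu]
    simpa using hNroot i
  set d : ℤ := M.det with hd
  set a : Fin n → ℤ := fun i => M.adjugate k i with ha
  -- key identity : u k ^ d = ∏ i, x i ^ a i
  have hsum : ∀ j, ∑ i, a i * M i j = if k = j then d else 0 := by
    intro j
    have := congrFun (congrFun (Matrix.adjugate_mul M) k) j
    simpa [Matrix.mul_apply, Matrix.smul_apply, Matrix.one_apply, ha, hd,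
      mul_comm] using this
  have key : u k ^ d = ∏ i, x i ^ a i := by
    have : ∏ i, x i ^ a i = ∏ j, u j ^ (∑ i, a i * M i j) :=
      calc ∏ i, x i ^ a i = ∏ i, ∏ j, u j ^ (a i * M i j) := by
            refine Finset.prod_congr rfl fun i _ => ?_
            rw [hx]
            rw [← Finset.prod_zpow]
            exact Finset.prod_congr rfl fun j _ => by rw [← zpow_mul, mul_comm]
        _ = ∏ j, ∏ i, u j ^ (a i * M i j) := Finset.prod_comm
        _ = ∏ j, u j ^ (∑ i, a i * M i j) :=
            Finset.prod_congr rfl fun j _ => (zpow_sum_aux _ _ _).symm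
    rw [this]
    rw [Finset.prod_congr rfl fun j _ => by rw [hsum j]]
    simp
  set Ntot : ℕ := ∏ i, N i with hNtot
  have hNtot1 : 1 ≤ Ntot := Finset.one_le_prod' fun i _ => hN1 i
  have hxNtot : ∀ i, x i ^ Ntot = 1 := by
    intro i
    rw [hNtot, ← Finset.mul_prod_erase _ _ (Finset.mem_univ i), pow_mul, hxN, one_pow]
  have hukd : u k ^ (d * Ntot) = 1 := by
    have : (u k ^ d) ^ (Ntot : ℤ) = 1 := by
      rw [key, ← Finset.prod_zpow]
      rw [Finset.prod_congr rfl fun i _ => by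
        rw [← zpow_mul, mul_comm, zpow_mul, zpow_natCast, hxNtot i, one_zpow]]
      simp
    rwa [← zpow_mul] at this
  refine ⟨(d * Ntot).natAbs, ?_, ?_⟩
  · have : d * Ntot ≠ 0 := mul_ne_zero hdet (by exact_mod_cast Nat.one_le_iff_ne_zero.mp hNtot1)
    omega
  · have huk : u k ^ ((d * Ntot).natAbs : ℤ) = 1 := by
      rcases Int.natAbs_eq (d * Ntot) with h | h
      · rw [← h, hukd]
      · rw [← neg_neg ((d * Ntot).natAbs : ℤ), ← h, zpow_neg, hukd, inv_one]
    rw [zpow_natCast] at huk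
    have := congrArg Units.val huk
    rw [Units.val_pow_eq_pow_val] at this
    simpa [hu] using this
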